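/- arXiv:2505.23138 — 2 statements merged into one kernel-verified Lean document; each statement's English description precedes it below -/
import Mathlib

section
/- Theorem (state equivalence under perfect training): Let E : (Fin h_p → U) × (Fin h_p → Y) → Z be a state estimator and P : Z × (Fin h_f → U) → (Fin h_f → W) an output predictor satisfying the perfect-training condition: for all x ∈ X, u^p ∈ U^{h_p}, u^f ∈ U^{h_f}, P(E(u^p, h_y^{h_p}(x, u^p)), u^f) = h_w^{h_f}(f^{h_p}(x, u^p), u^f). If the system (f, h_w) is uniformly h_f-observable, then there exists a map G : Z → X such that G(E(u^p, h_y^{h_p}(x, u^p))) = f^{h_p}(x, u^p) for all x and u^p; i.e., the true current state is recoverable from the estimator's output. -/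
/-- Iterated state-transition map: `iterF f j x u` applies `f` `j` times driven by inputs `u`. -/
def iterF {X U : Type*} (f : X → U → X) : (j : ℕ) → X → (Fin j → U) → X
  | 0, x, _ => x
  | j + 1, x, u => f (iterF f j x (fun i => u i.castSucc)) (u (Fin.last j))

/-- Stacked observation map: `stackedObs f h k x u i = h (fⁱ(x, first i inputs of u))`. -/
def stackedObs {X U Y : Type*} (f : X → U → X) (h : X → Y) (k : ℕ)
    (x : X) (u : Fin k → U) : Fin k → Y :=
  fun i => h (iterF f i.val x (fun j : Fin i.val => u ⟨j.1, j.2.trans i.2⟩))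

/-- Uniform `k`-observability: `(x, u) ↦ (hᵏ(x,u), u)` is injective. -/
def UniformObs {X U Y : Type*} (f : X → U → X) (h : X → Y) (k : ℕ) : Prop :=
  Function.Injective (fun p : X × (Fin k → U) => (stackedObs f h k p.1 p.2, p.2))

theorem state_equivalence_perfect_training {X U Y W Z : Type*}
    [Nonempty X] [Nonempty U]
    (f : X → U → X) (hy : X → Y) (hw : X → W) (hp hf : ℕ)
    (E : (Fin hp → U) × (Fin hp → Y) → Z)
    (P : Z × (Fin hf → U) → (Fin hf → W))
    (hperfect : ∀ (x : X) (up : Fin hp → U) (uf : Fin hf → U),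
      P (E (up, stackedObs f hy hp x up), uf) =
        stackedObs f hw hf (iterF f hp x up) uf)
    (hobsw : UniformObs f hw hf) :
    ∃ G : Z → X, ∀ (x : X) (up : Fin hp → U),
      G (E (up, stackedObs f hy hp x up)) = iterF f hp x up := by
  classical
  obtain ⟨u0⟩ := (inferInstance : Nonempty U)
  set uf : Fin hf → U := fun _ => u0 with huf
  refine ⟨fun z =>
    if h : ∃ x : X, stackedObs f hw hf x uf = P (z, uf) then h.choose
    else Classical.arbitrary X, ?_⟩
  intro x up
  have hex : ∃ x' : X, stackedObs f hw hf x' uf =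
      P (E (up, stackedObs f hy hp x up), uf) :=
    ⟨iterF f hp x up, (hperfect x up uf).symm⟩
  simp only [dif_pos hex]
  have hc := hex.choose_spec
  have hc2 := hc.trans (hperfect x up uf)
  have := hobsw (a₁ := (hex.choose, uf)) (a₂ := (iterF f hp x up, uf))
    (by simpa using hc2)
  exact congrArg Prod.fst this
end

section
/- Suppose E and P satisfy perfect training with respect to (f, h_y, h_w) as in the PVSID framework, and (f, h_w) is uniformly h_f-observable. Then the estimator E separates states: for any x₁, x₂ ∈ X and past inputs u₁, u₂ ∈ U^{h_p}, if E(u₁, h_y^{h_p}(x₁, u₁)) = E(u₂, h_y^{h_p}(x₂, u₂)), then f^{h_p}(x₁, u₁) = f^{h_p}(x₂, u₂). -/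
theorem estimator_separates_states {X U Y W Z : Type*} [Nonempty U]
    (f : X → U → X) (hy : X → Y) (hw : X → W) (hp hf : ℕ)
    (E : (Fin hp → U) × (Fin hp → Y) → Z)
    (P : Z × (Fin hf → U) → (Fin hf → W))
    (hperfect : ∀ (x : X) (up : Fin hp → U) (uf : Fin hf → U),
      P (E (up, stackedObs f hy hp x up), uf) =
        stackedObs f hw hf (iterF f hp x up) uf)
    (hobsw : UniformObs f hw hf)
    (x₁ x₂ : X) (u₁ u₂ : Fin hp → U)
    (hE : E (u₁, stackedObs f hy hp x₁ u₁) = E (u₂, stackedObs f hy hp x₂ u₂)) :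
    iterF f hp x₁ u₁ = iterF f hp x₂ u₂ := by
  obtain ⟨u⟩ := ‹Nonempty U›
  have h1 := hperfect x₁ u₁ (fun _ => u)
  have h2 := hperfect x₂ u₂ (fun _ => u)
  rw [hE, h2] at h1
  have := hobsw (a₁ := (iterF f hp x₂ u₂, fun _ => u))
    (a₂ := (iterF f hp x₁ u₁, fun _ => u)) (by simp [h1])
  exact (congrArg Prod.fst this).symm
end
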